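/- Let B₁, …, B_N be A-subalgebras of an A-valued probability space (B, E) that are monotone independent over A. Then B₁, …, B_{N−1}, B_N + A (the unital A-algebra generated by B_N) are also monotone independent over A. -/

import Mathlib

/-- Complete positivity via matrix amplifications. -/
def IsCP {A B : Type*} [Ring A] [StarRing A] [Ring B] [StarRing B] (Φ : B → A) : Prop :=
  ∀ (N : ℕ) (p : Matrix (Fin N) (Fin N) B),
    ∃ r : Matrix (Fin N) (Fin N) A, (star p * p).map Φ = star r * r

/-- Monotone independence over `A` of a family of subsets `C 0, …, C (N-1)` of `B`
with respect to the `A`-valued expectation `E` (and the inclusion `ι : A → B`):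
whenever `b_j` lies in an algebra whose index strictly exceeds those of both of its
neighbors (with the one-sided condition at the ends), `b_j` may be replaced by `E(b_j)`
inside the expectation of the product. -/
def MonIndep {A B : Type*} [Ring B] (N : ℕ) (E : B → A) (ι : A → B)
    (C : Fin N → Set B) : Prop :=
  ∀ (m : ℕ), 2 ≤ m → ∀ (k : Fin m → Fin N) (b : Fin m → B),
    (∀ i, b i ∈ C (k i)) → ∀ j : Fin m,
    (∀ h : (j : ℕ) + 1 < m, k ⟨(j : ℕ) + 1, h⟩ < k j) →
    (∀ _h : 0 < (j : ℕ),
        k ⟨(j : ℕ) - 1, lt_of_le_of_lt (Nat.sub_le _ _) j.isLt⟩ < k j) →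
    E (List.ofFn b).prod = E (List.ofFn (Function.update b j (ι (E (b j))))).prod



section StmtAux

variable {A B : Type*} [CStarAlgebra A] [CStarAlgebra B]

private lemma ofFn_update' {β : Type*} {n : ℕ} (b : Fin n → β) (j : Fin n) (v : β) :
    List.ofFn (Function.update b j v) = (List.ofFn b).set j v := by
  apply List.ext_getElem (by simp)
  intro i h1 h2
  simp only [List.getElem_ofFn, List.getElem_set]
  rcases eq_or_ne (j : ℕ) i with h | h
  · have hij : (⟨i, by simpa using h1⟩ : Fin n) = j := Fin.ext h.symm
    rw [if_pos h, hij, Function.update_self]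
  · rw [if_neg h, Function.update_of_ne]
    exact fun hc => h (by rw [← hc])

private lemma prod_update_add {β : Type*} [Ring β] {n : ℕ} (b : Fin n → β) (j : Fin n)
    (x y : β) :
    (List.ofFn (Function.update b j (x + y))).prod
      = (List.ofFn (Function.update b j x)).prod + (List.ofFn (Function.update b j y)).prod := by
  simp only [ofFn_update', List.prod_set, List.length_ofFn, j.isLt, if_true]
  rw [mul_add, add_mul]

private lemma set_mid {β : Type*} (l₁ l₂ : List β) (x v : β) :
    (l₁ ++ x :: l₂).set l₁.length v = l₁ ++ v :: l₂ := by
  induction l₁ with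
  | nil => rfl
  | cons a t ih => simpa using ih

private lemma set_mid' {β : Type*} (l₁ l₂ : List β) (x v : β) {i : ℕ} (hi : i = l₁.length) :
    (l₁ ++ x :: l₂).set i v = l₁ ++ v :: l₂ := by
  subst hi
  exact set_mid l₁ l₂ x v

private lemma normR {N : ℕ} (ι : A →⋆ₐ[ℂ] B) (C : Fin (N + 1) → Set B)
    (hC : ∀ i, ∀ (a a' : A), ∀ x ∈ C i, ι a * x * ι a' ∈ C i) :
    ∀ (n : ℕ) (p : List (Fin (N + 1) × B)), p.length ≤ n →
      (∀ q ∈ p, q.2 ∈ C q.1 ∨ ∃ a, q.2 = ι a) →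
      (∀ q ∈ p.getLast?, q.2 ∈ C q.1) →
      ∃ p' : List (Fin (N + 1) × B),
        (∀ q ∈ p', q.2 ∈ C q.1) ∧
        (p'.map Prod.snd).prod = (p.map Prod.snd).prod ∧
        p'.getLast?.map Prod.fst = p.getLast?.map Prod.fst ∧
        (p' = [] ↔ p = []) := by
  intro n
  induction n with
  | zero =>
    intro p hl _ _
    have hp : p = [] := List.eq_nil_of_length_eq_zero (Nat.le_zero.mp hl)
    exact ⟨[], by simp, by simp [hp], by simp [hp], by simp [hp]⟩
  | succ n IH =>
    intro p hl hg hlast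
    match p with
    | [] => exact ⟨[], by simp, by simp, by simp, by simp⟩
    | [q] =>
      have hq : q.2 ∈ C q.1 := hlast q (by simp [List.getLast?])
      exact ⟨[q], by simpa using hq, rfl, rfl, by simp⟩
    | q :: r :: rest =>
      rcases hg q (by simp) with hq | ⟨a, ha⟩
      · -- q is in C, recurse on tail
        obtain ⟨p', h1, h2, h3, h4⟩ := IH (r :: rest)
          (by simpa using Nat.succ_le_succ_iff.mp hl)
          (fun x hx => hg x (by simp [hx]))
          (by
            intro x hx
            exact hlast x (by rwa [List.getLast?_cons_cons]))
        have hne : p' ≠ [] := fun h => by simp [h] at h4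
        refine ⟨q :: p', ?_, ?_, ?_, by simp⟩
        · intro x hx
          rcases List.mem_cons.mp hx with h | h
          · subst h; exact hq
          · exact h1 x h
        · simp only [List.map_cons, List.prod_cons, h2]
        · match p', hne with
          | s :: p'', _ =>
            rw [List.getLast?_cons_cons]
            rw [show (s :: p'').getLast?.map Prod.fst = _ from h3,
              List.getLast?_cons_cons]
      · -- q = ι a : merge into r
        have hq2good : (r.1, ι a * r.2).2 ∈ C (r.1, ι a * r.2).1 ∨ ∃ a', (r.1, ι a * r.2).2 = ι a' := by
          rcases hg r (by simp) with hr | ⟨a', ha'⟩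
          · left
            have := hC r.1 a 1 r.2 hr
            simpa [map_one] using this
          · right
            exact ⟨a * a', by simp [ha', map_mul]⟩
        obtain ⟨p', h1, h2, h3, h4⟩ := IH ((r.1, ι a * r.2) :: rest)
          (by simpa using Nat.succ_le_succ_iff.mp hl)
          (by
            intro x hx
            rcases List.mem_cons.mp hx with h | h
            · subst h; exact hq2good
            · exact hg x (by simp [h]))
          (by
            intro x hx
            match rest with
            | [] =>
              simp only [List.getLast?_singleton, Option.mem_def, Option.some.injEq] at hx
              subst hx
              have hr : r.2 ∈ C r.1 := hlast r (by simp [List.getLast?_cons_cons, List.getLast?_singleton])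
              have := hC r.1 a 1 r.2 hr
              simpa [map_one] using this
            | s :: rest' =>
              rw [List.getLast?_cons_cons] at hx
              exact hlast x (by rw [List.getLast?_cons_cons, List.getLast?_cons_cons]; exact hx))
        refine ⟨p', h1, ?_, ?_, ?_⟩
        · rw [h2]
          simp [ha, mul_assoc]
        · rw [h3]
          match rest with
          | [] => simp
          | s :: rest' => simp [List.getLast?_cons_cons]
        · rw [h4]
          simp

private lemma normL {N : ℕ} (ι : A →⋆ₐ[ℂ] B) (C : Fin (N + 1) → Set B)
    (hC : ∀ i, ∀ (a a' : A), ∀ x ∈ C i, ι a * x * ι a' ∈ C i) :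
    ∀ (n : ℕ) (p : List (Fin (N + 1) × B)), p.length ≤ n →
      (∀ q ∈ p, q.2 ∈ C q.1 ∨ ∃ a, q.2 = ι a) →
      (∀ q ∈ p.head?, q.2 ∈ C q.1) →
      ∃ p' : List (Fin (N + 1) × B),
        (∀ q ∈ p', q.2 ∈ C q.1) ∧
        (p'.map Prod.snd).prod = (p.map Prod.snd).prod ∧
        p'.head?.map Prod.fst = p.head?.map Prod.fst ∧
        (p' = [] ↔ p = []) := by
  intro n
  induction n with
  | zero =>
    intro p hl _ _
    have hp : p = [] := List.eq_nil_of_length_eq_zero (Nat.le_zero.mp hl)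
    exact ⟨[], by simp, by simp [hp], by simp [hp], by simp [hp]⟩
  | succ n IH =>
    intro p hl hg hhead
    match p with
    | [] => exact ⟨[], by simp, by simp, by simp, by simp⟩
    | q :: rest =>
      have hq : q.2 ∈ C q.1 := hhead q (by simp)
      match rest with
      | [] => exact ⟨[q], by simpa using hq, rfl, rfl, by simp⟩
      | r :: rest' =>
        rcases hg r (by simp) with hr | ⟨a, ha⟩
        · -- r in C: recurse on r :: rest'
          obtain ⟨p', h1, h2, h3, h4⟩ := IH (r :: rest')
            (by simpa using Nat.succ_le_succ_iff.mp hl)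
            (fun x hx => hg x (by simp [hx]))
            (by intro x hx; simp only [List.head?_cons, Option.mem_def, Option.some.injEq] at hx
                subst hx; exact hr)
          refine ⟨q :: p', ?_, ?_, by simp, by simp⟩
          · intro x hx
            rcases List.mem_cons.mp hx with h | h
            · subst h; exact hq
            · exact h1 x h
          · simp only [List.map_cons, List.prod_cons, h2]
        · -- r = ι a : merge into q
          have hq2 : q.2 * ι a ∈ C q.1 := by
            have := hC q.1 1 a q.2 hq
            simpa [map_one] using this
          obtain ⟨p', h1, h2, h3, h4⟩ := IH ((q.1, q.2 * ι a) :: rest')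
            (by simpa using Nat.succ_le_succ_iff.mp hl)
            (by
              intro x hx
              rcases List.mem_cons.mp hx with h | h
              · subst h; exact Or.inl hq2
              · exact hg x (by simp [h]))
            (by intro x hx; simp only [List.head?_cons, Option.mem_def, Option.some.injEq] at hx
                subst hx; exact hq2)
          refine ⟨p', h1, ?_, by rw [h3]; simp, by rw [h4]; simp⟩
          rw [h2]
          simp [ha, mul_assoc]

private lemma get_mid {β : Type*} (l₁ l₂ : List β) (x : β) {i : ℕ} (hi : i = l₁.length)
    (h : i < (l₁ ++ x :: l₂).length) : (l₁ ++ x :: l₂)[i] = x := by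
  subst hi
  rw [List.getElem_append_right le_rfl]
  simp

private lemma get_mid_succ {β : Type*} (l₁ l₂ : List β) (x : β) {i : ℕ}
    (hi : i = l₁.length + 1) (h : i < (l₁ ++ x :: l₂).length) (h2 : 0 < l₂.length) :
    (l₁ ++ x :: l₂)[i] = l₂[0] := by
  subst hi
  rw [List.getElem_append_right (by omega)]
  simp

private lemma applyInd {N : ℕ} (ι : A →⋆ₐ[ℂ] B) (E : B →ₗ[ℂ] A)
    (C : Fin (N + 1) → Set B) (hind : MonIndep (N + 1) ⇑E ⇑ι C)
    (LL : List (Fin (N + 1) × B)) (hm : 2 ≤ LL.length)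
    (hall : ∀ q ∈ LL, q.2 ∈ C q.1) (jn : ℕ) (hj : jn < LL.length)
    (hR : ∀ _h : jn + 1 < LL.length, (LL[jn + 1]).1 < (LL[jn]'hj).1)
    (hLf : ∀ _h : 0 < jn, (LL[jn - 1]'(lt_of_le_of_lt (Nat.sub_le _ _) hj)).1 < (LL[jn]'hj).1) :
    E (LL.map Prod.snd).prod
      = E ((LL.map Prod.snd).set jn (ι (E (LL[jn]'hj).2))).prod := by
  have key := hind LL.length hm (fun i => (LL.get i).1) (fun i => (LL.get i).2)
    (fun i => hall _ (LL.get_mem i)) ⟨jn, hj⟩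
    (fun h => hR h) (fun h => hLf h)
  have h1 : List.ofFn (fun i : Fin LL.length => (LL.get i).2) = LL.map Prod.snd := by
    rw [show (fun i : Fin LL.length => (LL.get i).2) = Prod.snd ∘ LL.get from rfl,
      ← List.map_ofFn, List.ofFn_get]
  rw [ofFn_update', h1] at key
  exact key

private lemma KL {N : ℕ} (ι : A →⋆ₐ[ℂ] B) (E : B →ₗ[ℂ] A)
    (hE1 : ∀ a : A, E (ι a) = a)
    (C : Fin (N + 1) → Set B)
    (hC : ∀ i, ∀ (a a' : A), ∀ x ∈ C i, ι a * x * ι a' ∈ C i)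
    (hind : MonIndep (N + 1) ⇑E ⇑ι C)
    (p₁ p₂ : List (Fin (N + 1) × B)) (kj : Fin (N + 1)) (x : B)
    (hg : ∀ q ∈ p₁ ++ p₂, q.2 ∈ C q.1 ∨ (q.1 = Fin.last N ∧ ∃ a, q.2 = ι a))
    (hx : x ∈ C kj)
    (hL : ∀ q ∈ p₁.getLast?, q.1 < kj)
    (hH : ∀ q ∈ p₂.head?, q.1 < kj) :
    E ((p₁.map Prod.snd).prod * x * (p₂.map Prod.snd).prod) =
      E ((p₁.map Prod.snd).prod * ι (E x) * (p₂.map Prod.snd).prod) := by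
  have hIC : ∀ (p : List (Fin (N+1) × B)) (q : Fin (N+1) × B), q ∈ p → p = p₁ ∨ p = p₂ →
      q.1 < kj → q.2 ∈ C q.1 := by
    intro p q hq hp hlt
    have hmem : q ∈ p₁ ++ p₂ := by
      rcases hp with h | h
      · exact List.mem_append_left _ (h ▸ hq)
      · exact List.mem_append_right _ (h ▸ hq)
    rcases hg q hmem with h | ⟨h1, _⟩
    · exact h
    · exact absurd (h1 ▸ hlt) (not_lt.mpr (Fin.le_last kj))
  have hgw : ∀ q ∈ p₁ ++ p₂, q.2 ∈ C q.1 ∨ ∃ a, q.2 = ι a :=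
    fun q hq => (hg q hq).imp id fun h => h.2
  obtain ⟨p₁', h11, h12, h13, h14⟩ := normR ι C hC p₁.length p₁ le_rfl
    (fun q hq => hgw q (List.mem_append_left _ hq))
    (fun q hq => hIC p₁ q (List.mem_of_mem_getLast? hq) (Or.inl rfl) (hL q hq))
  obtain ⟨p₂', h21, h22, h23, h24⟩ := normL ι C hC p₂.length p₂ le_rfl
    (fun q hq => hgw q (List.mem_append_right _ hq))
    (fun q hq => hIC p₂ q (List.mem_of_mem_head? hq) (Or.inr rfl) (hH q hq))
  rw [← h12, ← h22]
  by_cases hdeg : p₁' = [] ∧ p₂' = []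
  · rw [hdeg.1, hdeg.2]
    simp [hE1]
  have hlen : (p₁' ++ (kj, x) :: p₂').length = p₁'.length + 1 + p₂'.length := by
    simp; omega
  have hm2 : 2 ≤ (p₁' ++ (kj, x) :: p₂').length := by
    rcases not_and_or.mp hdeg with h | h
    · have := List.length_pos_iff.mpr h
      omega
    · have := List.length_pos_iff.mpr h
      omega
  have hj : p₁'.length < (p₁' ++ (kj, x) :: p₂').length := by omega
  have hall : ∀ q ∈ p₁' ++ (kj, x) :: p₂', q.2 ∈ C q.1 := by
    intro q hq
    rcases List.mem_append.mp hq with h | h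
    · exact h11 q h
    · rcases List.mem_cons.mp h with h | h
      · subst h; exact hx
      · exact h21 q h
  have hmid : (p₁' ++ (kj, x) :: p₂')[p₁'.length]'hj = (kj, x) :=
    get_mid p₁' p₂' (kj, x) rfl hj
  have key := applyInd ι E C hind (p₁' ++ (kj, x) :: p₂') hm2 hall p₁'.length hj
    (by
      intro h
      have hp2pos : 0 < p₂'.length := by omega
      rw [get_mid_succ p₁' p₂' (kj, x) rfl h hp2pos, hmid]
      have hsome : p₂'.head? = some (p₂'[0]'hp2pos) := by
        rw [List.head?_eq_getElem?]
        exact List.getElem?_eq_getElem hp2pos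
      have hmap : p₂.head?.map Prod.fst = some ((p₂'[0]'hp2pos).1) := by
        rw [← h23, hsome]; rfl
      obtain ⟨q0, hq0, hq0f⟩ := Option.map_eq_some_iff.mp hmap
      rw [← hq0f]
      exact hH q0 hq0)
    (by
      intro h
      have hlt : p₁'.length - 1 < p₁'.length := by omega
      rw [List.getElem_append_left hlt, hmid]
      have hsome : p₁'.getLast? = some (p₁'[p₁'.length - 1]'hlt) := by
        rw [List.getLast?_eq_getElem?]
        exact List.getElem?_eq_getElem hlt
      have hmap : p₁.getLast?.map Prod.fst = some ((p₁'[p₁'.length - 1]'hlt).1) := by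
        rw [← h13, hsome]; rfl
      obtain ⟨q0, hq0, hq0f⟩ := Option.map_eq_some_iff.mp hmap
      rw [← hq0f]
      exact hL q0 hq0)
  rw [hmid] at key
  have hmap2 : (p₁' ++ (kj, x) :: p₂').map Prod.snd
      = p₁'.map Prod.snd ++ x :: p₂'.map Prod.snd := by simp
  rw [hmap2] at key
  have hset : (p₁'.map Prod.snd ++ x :: p₂'.map Prod.snd).set p₁'.length (ι (E x))
      = p₁'.map Prod.snd ++ ι (E x) :: p₂'.map Prod.snd := by
    rw [show p₁'.length = (p₁'.map Prod.snd).length from (List.length_map _).symm]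
    exact set_mid _ _ _ _
  rw [hset] at key
  simpa [List.prod_append, List.prod_cons, mul_assoc] using key

private lemma keypure {N : ℕ} (ι : A →⋆ₐ[ℂ] B) (E : B →ₗ[ℂ] A)
    (hE1 : ∀ a : A, E (ι a) = a)
    (C : Fin (N + 1) → Set B)
    (hC : ∀ i, ∀ (a a' : A), ∀ x ∈ C i, ι a * x * ι a' ∈ C i)
    (hind : MonIndep (N + 1) ⇑E ⇑ι C)
    (m : ℕ) (k : Fin m → Fin (N + 1)) (b : Fin m → B)
    (hg : ∀ i, b i ∈ C (k i) ∨ (k i = Fin.last N ∧ ∃ a, b i = ι a))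
    (j : Fin m)
    (h1 : ∀ h : (j : ℕ) + 1 < m, k ⟨(j : ℕ) + 1, h⟩ < k j)
    (h2 : ∀ _h : 0 < (j : ℕ),
        k ⟨(j : ℕ) - 1, lt_of_le_of_lt (Nat.sub_le _ _) j.isLt⟩ < k j) :
    E (List.ofFn b).prod = E (List.ofFn (Function.update b j (ι (E (b j))))).prod := by
  rcases hg j with hbj | ⟨_, a, hbj⟩
  · -- b j ∈ C (k j): list decomposition
    set L : List (Fin (N + 1) × B) := List.ofFn (fun i => (k i, b i)) with hLdef
    have hLlen : L.length = m := by simp [hLdef]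
    have hLget : ∀ (i : ℕ) (hi : i < m), L[i]'(by rw [hLlen]; exact hi) = (k ⟨i, hi⟩, b ⟨i, hi⟩) := by
      intro i hi
      simp [hLdef]
    have hjL : (j : ℕ) < L.length := lt_of_lt_of_eq j.isLt hLlen.symm
    have hsplit : L = L.take j ++ (k j, b j) :: L.drop (j + 1) := by
      conv_lhs => rw [← List.take_append_drop (j : ℕ) L]
      congr 1
      rw [List.drop_eq_getElem_cons hjL, hLget _ j.isLt]
    have hmemL : ∀ q ∈ L, q.2 ∈ C q.1 ∨ (q.1 = Fin.last N ∧ ∃ a, q.2 = ι a) := by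
      intro q hq
      rw [hLdef, List.mem_ofFn] at hq
      obtain ⟨i, hi⟩ := hq
      rw [← hi]
      exact hg i
    have htakelen : (L.take (j : ℕ)).length = (j : ℕ) := by
      rw [List.length_take]
      omega
    have key := KL ι E hE1 C hC hind (L.take j) (L.drop (j + 1)) (k j) (b j)
      (by
        intro q hq
        rcases List.mem_append.mp hq with h | h
        · exact hmemL q (List.mem_of_mem_take h)
        · exact hmemL q (List.mem_of_mem_drop h))
      hbj
      (by
        intro q hq
        have hjpos : 0 < (j : ℕ) := by
          by_contra hc
          have : (j : ℕ) = 0 := by omega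
          rw [this] at hq
          simp at hq
        have hlt : (j : ℕ) - 1 < (L.take (j : ℕ)).length := by omega
        have hsome : (L.take (j : ℕ)).getLast? = some ((L.take (j : ℕ))[(j : ℕ) - 1]'hlt) := by
          rw [List.getLast?_eq_getElem?, htakelen]
          exact List.getElem?_eq_getElem (by omega)
        rw [hsome, Option.mem_def, Option.some.injEq] at hq
        subst hq
        rw [List.getElem_take, hLget _ (by omega)]
        exact h2 hjpos
      )
      (by
        intro q hq
        have hd : (j : ℕ) + 1 < m ∨ ¬ ((j : ℕ) + 1 < m) := em _
        rcases hd with h | h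
        · have hlt : 0 < (L.drop ((j : ℕ) + 1)).length := by
            rw [List.length_drop]
            omega
          have hsome : (L.drop ((j : ℕ) + 1)).head? = some ((L.drop ((j : ℕ) + 1))[0]'hlt) := by
            rw [List.head?_eq_getElem?]
            exact List.getElem?_eq_getElem hlt
          rw [hsome, Option.mem_def, Option.some.injEq] at hq
          subst hq
          rw [List.getElem_drop, hLget _ (by omega)]
          exact h1 h
        · have : L.drop ((j : ℕ) + 1) = [] := by
            apply List.drop_eq_nil_of_le
            omega
          rw [this] at hq
          simp at hq)
    have hofn : List.ofFn b = L.map Prod.snd := by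
      rw [hLdef, List.map_ofFn]
      rfl
    have hmapsplit : L.map Prod.snd
        = (L.take (j : ℕ)).map Prod.snd ++ b j :: (L.drop ((j : ℕ) + 1)).map Prod.snd := by
      conv_lhs => rw [hsplit]
      simp
    calc E (List.ofFn b).prod
        = E (((L.take (j : ℕ)).map Prod.snd).prod * b j
            * ((L.drop ((j : ℕ) + 1)).map Prod.snd).prod) := by
          rw [hofn, hmapsplit]
          simp [List.prod_append, List.prod_cons, mul_assoc]
      _ = E (((L.take (j : ℕ)).map Prod.snd).prod * ι (E (b j))
            * ((L.drop ((j : ℕ) + 1)).map Prod.snd).prod) := key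
      _ = E (List.ofFn (Function.update b j (ι (E (b j))))).prod := by
          rw [ofFn_update', hofn, hmapsplit]
          rw [set_mid' _ _ _ _ (by rw [List.length_map, htakelen])]
          simp [List.prod_append, List.prod_cons, mul_assoc]
  · -- b j = ι a : both sides are equal
    have : ι (E (b j)) = b j := by rw [hbj, hE1]
    rw [this, Function.update_eq_self]

private lemma main' {N : ℕ} (ι : A →⋆ₐ[ℂ] B) (E : B →ₗ[ℂ] A)
    (hE1 : ∀ a : A, E (ι a) = a)
    (C : Fin (N + 1) → Set B)
    (hC : ∀ i, ∀ (a a' : A), ∀ x ∈ C i, ι a * x * ι a' ∈ C i)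
    (hind : MonIndep (N + 1) ⇑E ⇑ι C) :
    ∀ (n m : ℕ) (k : Fin m → Fin (N + 1)) (b : Fin m → B) (s : Finset (Fin m)),
      s.card ≤ n →
      (∀ i, b i ∈ C (k i) ∨ (k i = Fin.last N ∧ ∃ a, b i = ι a) ∨
        (k i = Fin.last N ∧ ∃ c ∈ C (Fin.last N), ∃ a, b i = c + ι a)) →
      (∀ i ∉ s, b i ∈ C (k i) ∨ (k i = Fin.last N ∧ ∃ a, b i = ι a)) →
      ∀ j : Fin m,
      (∀ h : (j : ℕ) + 1 < m, k ⟨(j : ℕ) + 1, h⟩ < k j) →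
      (∀ _h : 0 < (j : ℕ),
          k ⟨(j : ℕ) - 1, lt_of_le_of_lt (Nat.sub_le _ _) j.isLt⟩ < k j) →
      E (List.ofFn b).prod = E (List.ofFn (Function.update b j (ι (E (b j))))).prod := by
  intro n
  induction n with
  | zero =>
    intro m k b s hs hg hpure j h1 h2
    exact keypure ι E hE1 C hC hind m k b (fun i => hpure i (by
      simp [Finset.card_eq_zero.mp (Nat.le_zero.mp hs)])) j h1 h2
  | succ n IH =>
    intro m k b s hs hg hpure j h1 h2
    rcases s.eq_empty_or_nonempty with hse | ⟨i, hi⟩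
    · exact keypure ι E hE1 C hC hind m k b (fun i => hpure i (by simp [hse])) j h1 h2
    have hcard : (s.erase i).card ≤ n := by
      rw [Finset.card_erase_of_mem hi]
      omega
    rcases hg i with hc | hp | ⟨hki, c, hcC, a, hba⟩
    ·
      exact IH m k b (s.erase i) hcard hg
        (fun i' hi' => by
          rcases eq_or_ne i' i with rfl | hne
          · exact Or.inl hc
          · exact hpure i' (fun hmem => hi' (Finset.mem_erase.mpr ⟨hne, hmem⟩))) j h1 h2
    · exact IH m k b (s.erase i) hcard hg
        (fun i' hi' => by
          rcases eq_or_ne i' i with rfl | hne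
          · exact Or.inr hp
          · exact hpure i' (fun hmem => hi' (Finset.mem_erase.mpr ⟨hne, hmem⟩))) j h1 h2
    · -- b i = c + ι a
      have hcCk : c ∈ C (k i) := by rw [hki]; exact hcC
      rcases eq_or_ne i j with rfl | hij
      · -- i = j
        have e1 : (List.ofFn b).prod
            = (List.ofFn (Function.update b i c)).prod
              + (List.ofFn (Function.update b i (ι a))).prod := by
          conv_lhs => rw [← Function.update_eq_self i b]
          rw [hba]
          exact prod_update_add b i c (ι a)
        have e2 : ι (E (b i)) = ι (E c) + ι a := by
          rw [hba, map_add, map_add, hE1]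
        have e3 : (List.ofFn (Function.update b i (ι (E (b i))))).prod
            = (List.ofFn (Function.update b i (ι (E c)))).prod
              + (List.ofFn (Function.update b i (ι a))).prod := by
          rw [e2]
          exact prod_update_add b i (ι (E c)) (ι a)
        have key := IH m k (Function.update b i c) (s.erase i) hcard
          (fun i' => by
            rcases eq_or_ne i' i with rfl | hne
            · rw [Function.update_self]
              exact Or.inl hcCk
            · rw [Function.update_of_ne hne]
              exact hg i')
          (fun i' hi' => by
            rcases eq_or_ne i' i with rfl | hne
            · rw [Function.update_self]
              exact Or.inl hcCk
            · rw [Function.update_of_ne hne]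
              exact hpure i' (fun hmem => hi' (Finset.mem_erase.mpr ⟨hne, hmem⟩))) i h1 h2
        rw [Function.update_self, Function.update_idem] at key
        rw [e1, e3, map_add, map_add, key]
      · -- i ≠ j
        have hji : j ≠ i := hij.symm
        have e1 : (List.ofFn b).prod
            = (List.ofFn (Function.update b i c)).prod
              + (List.ofFn (Function.update b i (ι a))).prod := by
          conv_lhs => rw [← Function.update_eq_self i b]
          rw [hba]
          exact prod_update_add b i c (ι a)
        have e2 : (List.ofFn (Function.update b j (ι (E (b j))))).prod
            = (List.ofFn (Function.update (Function.update b j (ι (E (b j)))) i c)).prod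
              + (List.ofFn (Function.update (Function.update b j (ι (E (b j)))) i (ι a))).prod := by
          conv_lhs => rw [← Function.update_eq_self i (Function.update b j (ι (E (b j))))]
          rw [show Function.update b j (ι (E (b j))) i = c + ι a from by
            rw [Function.update_of_ne hij]; exact hba]
          exact prod_update_add _ i c (ι a)
        have goodupd : ∀ v : B, v ∈ C (k i) ∨ (k i = Fin.last N ∧ ∃ a', v = ι a') →
            (∀ i', Function.update b i v i' ∈ C (k i') ∨
              (k i' = Fin.last N ∧ ∃ a', Function.update b i v i' = ι a') ∨
              (k i' = Fin.last N ∧ ∃ c' ∈ C (Fin.last N), ∃ a', Function.update b i v i' = c' + ι a')) := by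
          intro v hv i'
          rcases eq_or_ne i' i with rfl | hne
          · rw [Function.update_self]
            rcases hv with h | h
            · exact Or.inl h
            · exact Or.inr (Or.inl h)
          · rw [Function.update_of_ne hne]
            exact hg i'
        have pureupd : ∀ v : B, v ∈ C (k i) ∨ (k i = Fin.last N ∧ ∃ a', v = ι a') →
            (∀ i', i' ∉ s.erase i → Function.update b i v i' ∈ C (k i') ∨
              (k i' = Fin.last N ∧ ∃ a', Function.update b i v i' = ι a')) := by
          intro v hv i' hi'
          rcases eq_or_ne i' i with rfl | hne
          · rw [Function.update_self]
            exact hv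
          · rw [Function.update_of_ne hne]
            exact hpure i' (fun hmem => hi' (Finset.mem_erase.mpr ⟨hne, hmem⟩))
        have key1 := IH m k (Function.update b i c) (s.erase i) hcard
          (goodupd c (Or.inl hcCk)) (pureupd c (Or.inl hcCk)) j h1 h2
        have key2 := IH m k (Function.update b i (ι a)) (s.erase i) hcard
          (goodupd (ι a) (Or.inr ⟨hki, a, rfl⟩)) (pureupd (ι a) (Or.inr ⟨hki, a, rfl⟩)) j h1 h2
        rw [Function.update_of_ne hji] at key1 key2
        rw [Function.update_comm hij] at key1
        rw [Function.update_comm hij] at key2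
        rw [e1, e2, map_add, map_add, key1, key2]

end StmtAux

/-- If `A`-subalgebras `B₁, …, B_N` of an `A`-valued probability space are monotone
independent over `A`, then so are `B₁, …, B_{N-1}, B_N + A`. -/
theorem stmt18 {A B : Type*} [CStarAlgebra A] [CStarAlgebra B]
    (ι : A →⋆ₐ[ℂ] B) (E : B →ₗ[ℂ] A)
    (hE1 : ∀ a : A, E (ι a) = a)
    (hEbi : ∀ (a a' : A) (b : B), E (ι a * b * ι a') = a * E b * a')
    (hECP : IsCP ⇑E)
    (N : ℕ) (C : Fin (N + 1) → Set B)
    (hCsub : ∀ i,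
      (∀ x ∈ C i, ∀ y ∈ C i, x + y ∈ C i) ∧
      (∀ x ∈ C i, ∀ y ∈ C i, x * y ∈ C i) ∧
      (∀ (c : ℂ), ∀ x ∈ C i, c • x ∈ C i) ∧
      (∀ x ∈ C i, star x ∈ C i) ∧
      (∀ (a a' : A), ∀ x ∈ C i, ι a * x * ι a' ∈ C i))
    (hind : MonIndep (N + 1) ⇑E ⇑ι C) :
    MonIndep (N + 1) ⇑E ⇑ι
      (Function.update C (Fin.last N)
        {b : B | ∃ c ∈ C (Fin.last N), ∃ a : A, b = c + ι a}) := by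
  intro m _hm k b hb j h1 h2
  apply main' ι E hE1 C (fun i => (hCsub i).2.2.2.2) hind m m k b Finset.univ
    (by simp) ?_ (fun i hi => absurd (Finset.mem_univ i) hi) j h1 h2
  intro i
  rcases eq_or_ne (k i) (Fin.last N) with hki | hki
  · have hbi := hb i
    rw [hki, Function.update_self] at hbi
    obtain ⟨c, hc, a, hba⟩ := hbi
    exact Or.inr (Or.inr ⟨hki, c, hc, a, hba⟩)
  · have hbi := hb i
    rw [Function.update_of_ne hki] at hbi
    exact Or.inl hbi
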